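/- arXiv:2010.15410 — 5 statements merged into one kernel-verified Lean document; each statement's English description precedes it below -/
import Mathlib

section
/- Let β, γ > 0, and let S₀, E₀, I₀ > 0 with S₀ + E₀ + I₀ ≤ 1. Then the equation x - (γ/β)·ln x = S₀ + E₀ + I₀ - (γ/β)·ln S₀ has exactly one solution x in (0, min(S₀, γ/β)), provided S₀ ≤ γ/β or E₀ + I₀ > 0. -/
theorem stmt3 (β γ S₀ E₀ I₀ : ℝ) (hβ : 0 < β) (hγ : 0 < γ)
    (hS₀ : 0 < S₀) (hE₀ : 0 < E₀) (hI₀ : 0 < I₀)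
    (hsum : S₀ + E₀ + I₀ ≤ 1)
    (hcase : S₀ ≤ γ / β ∨ 0 < E₀ + I₀) :
    ∃! x : ℝ, x ∈ Set.Ioo 0 (min S₀ (γ / β)) ∧
      x - (γ / β) * Real.log x = S₀ + E₀ + I₀ - (γ / β) * Real.log S₀ := by
  set c := γ / β with hc
  have hc0 : 0 < c := div_pos hγ hβ
  set m := min S₀ c with hm
  have hm0 : 0 < m := lt_min hS₀ hc0
  have hmc : m ≤ c := min_le_right _ _
  set C := S₀ + E₀ + I₀ - c * Real.log S₀ with hC
  set g : ℝ → ℝ := fun x => x - c * Real.log x with hg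
  have hcontg : ∀ s : Set ℝ, (∀ x ∈ s, (0:ℝ) < x) → ContinuousOn g s := by
    intro s hs
    apply ContinuousOn.sub continuousOn_id
    exact continuousOn_const.mul (Real.continuousOn_log.mono
      (fun x hx => ne_of_gt (hs x hx)))
  -- strict anti on Ioc 0 c
  have hanti : StrictAntiOn g (Set.Ioc 0 c) := by
    apply strictAntiOn_of_deriv_neg (convex_Ioc 0 c)
      (hcontg _ (fun x hx => hx.1))
    intro x hx
    rw [interior_Ioc] at hx
    have hx0 : x ≠ 0 := ne_of_gt hx.1
    have hd : HasDerivAt g (1 - c * x⁻¹) x :=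
      (hasDerivAt_id x).sub ((Real.hasDerivAt_log hx0).const_mul c)
    rw [hd.deriv]
    have h1 : 1 < c * x⁻¹ := by
      have := (one_lt_div hx.1).mpr hx.2
      rwa [div_eq_mul_inv] at this
    linarith
  -- g m < C
  have hgmC : g m < C := by
    rcases le_total S₀ c with h | h
    · rw [hm, min_eq_left h]
      simp only [hg, hC]
      linarith
    · rw [hm, min_eq_right h]
      have hlog : Real.log (S₀ / c) ≤ S₀ / c - 1 :=
        Real.log_le_sub_one_of_pos (div_pos hS₀ hc0)
      rw [Real.log_div (ne_of_gt hS₀) (ne_of_gt hc0)] at hlog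
      have h2 : c * (Real.log S₀ - Real.log c) ≤ c * (S₀ / c - 1) :=
        mul_le_mul_of_nonneg_left hlog (le_of_lt hc0)
      have h3 : c * (S₀ / c - 1) = S₀ - c := by field_simp
      simp only [hg, hC]
      nlinarith
  -- pick a with g a > C
  set a := min (m / 2) (Real.exp (-C / c)) with ha
  have ha0 : 0 < a := lt_min (by linarith) (Real.exp_pos _)
  have ham : a < m := lt_of_le_of_lt (min_le_left _ _) (by linarith)
  have hgaC : C < g a := by
    have hla : Real.log a ≤ -C / c := by
      calc Real.log a ≤ Real.log (Real.exp (-C / c)) :=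
            Real.log_le_log ha0 (min_le_right _ _)
        _ = -C / c := Real.log_exp _
    have : c * Real.log a ≤ -C := by
      have := mul_le_mul_of_nonneg_left hla (le_of_lt hc0)
      rwa [mul_div_cancel₀ _ (ne_of_gt hc0)] at this
    simp only [hg]
    linarith
  -- IVT
  have hivt := intermediate_value_Ioo' (le_of_lt ham)
    (hcontg _ (fun x hx => lt_of_lt_of_le ha0 hx.1))
  obtain ⟨x, hx, hgx⟩ := hivt ⟨hgmC, hgaC⟩
  refine ⟨x, ⟨⟨lt_trans ha0 hx.1, hx.2⟩, hgx⟩, ?_⟩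
  rintro y ⟨⟨hy0, hym⟩, hgy⟩
  have hyI : y ∈ Set.Ioc 0 c := ⟨hy0, le_trans (le_of_lt hym) hmc⟩
  have hxI : x ∈ Set.Ioc 0 c := ⟨lt_trans ha0 hx.1, le_trans (le_of_lt hx.2) hmc⟩
  exact hanti.injOn hyI hxI (by simpa [hg] using hgy.trans hgx.symm)
end

section
/- Let Ω = Ω₁ ∪ Ω₂ (disjoint), with block contact structure β₂, γ₂ > 0 on Ω₂. If E₂⁰ + I₂⁰ = 0 and β₂S₂⁰/γ₂ > 1, then the scalar equation ln s - (β₂/γ₂)s = ln S₂⁰ - (β₂/γ₂)(S₂⁰ + E₂⁰ + I₂⁰) in the unknown s ∈ (0, S₂⁰] admits exactly two solutions: s = S₂⁰ and a second solution strictly smaller than S₂⁰. -/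
theorem stmt12 (β₂ γ₂ S₂ E₂ I₂ : ℝ) (hβ : 0 < β₂) (hγ : 0 < γ₂) (hS : 0 < S₂)
    (hE : 0 ≤ E₂) (hI : 0 ≤ I₂) (hEI : E₂ + I₂ = 0)
    (hR : 1 < β₂ * S₂ / γ₂) :
    ∃ s' : ℝ, 0 < s' ∧ s' < S₂ ∧
      (Real.log s' - (β₂ / γ₂) * s'
        = Real.log S₂ - (β₂ / γ₂) * (S₂ + E₂ + I₂)) ∧
      (Real.log S₂ - (β₂ / γ₂) * S₂
        = Real.log S₂ - (β₂ / γ₂) * (S₂ + E₂ + I₂)) ∧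
      ∀ s ∈ Set.Ioc (0 : ℝ) S₂,
        Real.log s - (β₂ / γ₂) * s = Real.log S₂ - (β₂ / γ₂) * (S₂ + E₂ + I₂) →
        s = s' ∨ s = S₂ := by
  have hE0 : E₂ = 0 := by linarith
  have hI0 : I₂ = 0 := by linarith
  subst hE0 hI0
  set c := β₂ / γ₂ with hc
  have hc0 : 0 < c := div_pos hβ hγ
  set m := 1 / c with hm
  have hm0 : 0 < m := by positivity
  have hmS : m < S₂ := by
    rw [hm, div_lt_iff₀ hc0]
    have : β₂ * S₂ / γ₂ = S₂ * c := by rw [hc]; ring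
    linarith [this ▸ hR]
  set f : ℝ → ℝ := fun s => Real.log s - c * s with hf
  have hderiv : ∀ x : ℝ, 0 < x → HasDerivAt f (1 / x - c) x := by
    intro x hx
    have h1 := Real.hasDerivAt_log hx.ne'
    have h2 : HasDerivAt (fun s => c * s) (c * 1) x := (hasDerivAt_id x).const_mul c
    have h3 := h1.sub h2
    simp only [one_div, mul_one] at h3 ⊢
    exact h3
  have hcont : ContinuousOn f (Set.Ioi 0) := by
    intro x hx
    exact ((hderiv x hx).continuousAt).continuousWithinAt
  have hmono : StrictMonoOn f (Set.Ioc 0 m) := by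
    apply strictMonoOn_of_deriv_pos (convex_Ioc 0 m)
    · exact hcont.mono (fun x hx => hx.1)
    · intro x hx
      rw [interior_Ioc] at hx
      rw [(hderiv x hx.1).deriv, sub_pos]
      rw [lt_div_iff₀ hx.1]
      have := (lt_div_iff₀ hc0).mp hx.2
      linarith [this]
  have hanti : StrictAntiOn f (Set.Icc m S₂) := by
    apply strictAntiOn_of_deriv_neg (convex_Icc m S₂)
    · exact hcont.mono (fun x hx => lt_of_lt_of_le hm0 hx.1)
    · intro x hx
      rw [interior_Icc] at hx
      have hx0 : 0 < x := lt_trans hm0 hx.1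
      rw [(hderiv x hx0).deriv, sub_neg]
      rw [div_lt_iff₀ hx0]
      have := (div_lt_iff₀ hc0).mp hx.1
      linarith [this]
  have hfmS : f S₂ < f m :=
    hanti (Set.left_mem_Icc.mpr hmS.le) (Set.right_mem_Icc.mpr hmS.le) hmS
  -- pick a small point where f < f S₂
  set s₀ := min (m / 2) (Real.exp (f S₂ - 1)) with hs₀
  have hs₀0 : 0 < s₀ := lt_min (by linarith) (Real.exp_pos _)
  have hs₀m : s₀ < m := lt_of_le_of_lt (min_le_left _ _) (by linarith)
  have hfs₀ : f s₀ < f S₂ := by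
    have h1 : Real.log s₀ ≤ f S₂ - 1 := by
      calc Real.log s₀ ≤ Real.log (Real.exp (f S₂ - 1)) :=
            Real.log_le_log hs₀0 (min_le_right _ _)
        _ = f S₂ - 1 := Real.log_exp _
    have h2 : 0 < c * s₀ := by positivity
    simp only [hf] at h1 ⊢
    nlinarith
  have hcontIcc : ContinuousOn f (Set.Icc s₀ m) :=
    hcont.mono (fun x hx => lt_of_lt_of_le hs₀0 hx.1)
  obtain ⟨s', hs'mem, hfs'⟩ :=
    intermediate_value_Ioo hs₀m.le hcontIcc ⟨hfs₀, hfmS⟩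
  have hs'0 : 0 < s' := lt_trans hs₀0 hs'mem.1
  have hs'm : s' < m := hs'mem.2
  refine ⟨s', hs'0, lt_trans hs'm hmS, ?_, by ring_nf, ?_⟩
  · simpa [hf, add_zero] using hfs'
  · intro s hs heq
    have heqf : f s = f S₂ := by simpa [hf, add_zero] using heq
    rcases le_or_gt s m with hsm | hsm
    · left
      exact hmono.injOn ⟨hs.1, hsm⟩ ⟨hs'0, hs'm.le⟩ (heqf.trans hfs'.symm)
    · right
      exact hanti.injOn ⟨hsm.le, hs.2⟩ (Set.right_mem_Icc.mpr hmS.le) heqf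
end

section
/- Two-group final size non-uniqueness: with constants β₁, β₂, β₁₂, γ₁, γ₂ > 0, initial data S₁⁰, S₂⁰ > 0, E₁⁰ + I₁⁰ > 0, E₂⁰ + I₂⁰ = 0, and β₂S₂⁰/γ₂ > 1, the system ln S₁ - (β₁/γ₁)S₁ - (β₁₂/γ₂)S₂ = ln S₁⁰ - (β₁/γ₁)(S₁⁰+E₁⁰+I₁⁰) - (β₁₂/γ₂)(S₂⁰+E₂⁰+I₂⁰), ln S₂ - (β₂/γ₂)S₂ = ln S₂⁰ - (β₂/γ₂)(S₂⁰+E₂⁰+I₂⁰), admits at least two distinct solutions (S₁, S₂) with 0 < S₁ ≤ S₁⁰ and 0 < S₂ ≤ S₂⁰. -/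
lemma exA (k s₀ c : ℝ) (hk : 0 < k) (hs₀ : 0 < s₀)
    (hc : c ≤ Real.log s₀ - k * s₀) :
    ∃ s, 0 < s ∧ s ≤ s₀ ∧ Real.log s - k * s = c := by
  set t := Real.exp c with ht
  have htpos : 0 < t := Real.exp_pos c
  have hclt : c < Real.log s₀ := by nlinarith
  have hts : t < s₀ := by
    have := Real.exp_lt_exp.mpr hclt
    rwa [Real.exp_log hs₀] at this
  have hcont : ContinuousOn (fun s => Real.log s - k * s) (Set.Icc t s₀) := by
    apply ContinuousOn.sub
    · apply Real.continuousOn_log.mono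
      intro x hx
      simp only [Set.mem_compl_iff, Set.mem_singleton_iff]
      have := hx.1
      nlinarith [htpos]
    · exact (continuous_const.mul continuous_id).continuousOn
  have hmem : c ∈ Set.Icc (Real.log t - k * t) (Real.log s₀ - k * s₀) := by
    constructor
    · rw [ht, Real.log_exp]; nlinarith
    · exact hc
  obtain ⟨s, hs, hfs⟩ := intermediate_value_Icc hts.le hcont hmem
  exact ⟨s, lt_of_lt_of_le htpos hs.1, hs.2, hfs⟩

theorem stmt13 (β₁ β₂ β₁₂ γ₁ γ₂ S₁ S₂ E₁ I₁ E₂ I₂ : ℝ)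
    (hβ₁ : 0 < β₁) (hβ₂ : 0 < β₂) (hβ₁₂ : 0 < β₁₂) (hγ₁ : 0 < γ₁) (hγ₂ : 0 < γ₂)
    (hS₁ : 0 < S₁) (hS₂ : 0 < S₂)
    (hE₁ : 0 ≤ E₁) (hI₁ : 0 ≤ I₁) (hEI₁ : 0 < E₁ + I₁)
    (hE₂ : 0 ≤ E₂) (hI₂ : 0 ≤ I₂) (hEI₂ : E₂ + I₂ = 0)
    (hR : 1 < β₂ * S₂ / γ₂) :
    ∃ a b : ℝ × ℝ, a ≠ b ∧
      (0 < a.1 ∧ a.1 ≤ S₁ ∧ 0 < a.2 ∧ a.2 ≤ S₂ ∧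
        Real.log a.1 - (β₁ / γ₁) * a.1 - (β₁₂ / γ₂) * a.2
          = Real.log S₁ - (β₁ / γ₁) * (S₁ + E₁ + I₁) - (β₁₂ / γ₂) * (S₂ + E₂ + I₂) ∧
        Real.log a.2 - (β₂ / γ₂) * a.2
          = Real.log S₂ - (β₂ / γ₂) * (S₂ + E₂ + I₂)) ∧
      (0 < b.1 ∧ b.1 ≤ S₁ ∧ 0 < b.2 ∧ b.2 ≤ S₂ ∧
        Real.log b.1 - (β₁ / γ₁) * b.1 - (β₁₂ / γ₂) * b.2
          = Real.log S₁ - (β₁ / γ₁) * (S₁ + E₁ + I₁) - (β₁₂ / γ₂) * (S₂ + E₂ + I₂) ∧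
        Real.log b.2 - (β₂ / γ₂) * b.2
          = Real.log S₂ - (β₂ / γ₂) * (S₂ + E₂ + I₂)) := by
  set k₁ := β₁ / γ₁ with hk₁def
  set k₂ := β₂ / γ₂ with hk₂def
  set m := β₁₂ / γ₂ with hmdef
  have hk₁ : 0 < k₁ := div_pos hβ₁ hγ₁
  have hk₂ : 0 < k₂ := div_pos hβ₂ hγ₂
  have hm : 0 < m := div_pos hβ₁₂ hγ₂
  have hkS : 1 < k₂ * S₂ := by
    rw [hk₂def, div_mul_eq_mul_div]; exact hR
  have hS2e : S₂ + E₂ + I₂ = S₂ := by linarith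
  -- small root of the second equation
  have hinv : (0:ℝ) < 1 / k₂ := by positivity
  have hlogk : Real.log (1 / k₂) = -Real.log k₂ := by
    rw [Real.log_div one_ne_zero (ne_of_gt hk₂), Real.log_one]; ring
  have hle : Real.log S₂ - k₂ * S₂ ≤ Real.log (1 / k₂) - k₂ * (1 / k₂) := by
    have h1 : Real.log (k₂ * S₂) ≤ k₂ * S₂ - 1 :=
      Real.log_le_sub_one_of_pos (by positivity)
    rw [Real.log_mul (ne_of_gt hk₂) (ne_of_gt hS₂)] at h1
    rw [hlogk]
    have : k₂ * (1 / k₂) = 1 := by field_simp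
    rw [this]; linarith
  obtain ⟨s₂, hs₂pos, hs₂le, hs₂eq⟩ := exA k₂ (1 / k₂) (Real.log S₂ - k₂ * S₂) hk₂ hinv hle
  have hinvlt : 1 / k₂ < S₂ := by rw [div_lt_iff₀ hk₂]; linarith
  have hs₂ltS₂ : s₂ < S₂ := lt_of_le_of_lt hs₂le hinvlt
  -- first-equation solutions for a given second coordinate y ≤ S₂
  have solve1 : ∀ y : ℝ, y ≤ S₂ →
      ∃ x, 0 < x ∧ x ≤ S₁ ∧
        Real.log x - k₁ * x = Real.log S₁ - k₁ * (S₁ + E₁ + I₁) - m * S₂ + m * y := by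
    intro y hy
    apply exA k₁ S₁ _ hk₁ hS₁
    nlinarith
  obtain ⟨x₁, hx₁pos, hx₁le, hx₁eq⟩ := solve1 S₂ le_rfl
  obtain ⟨x₂, hx₂pos, hx₂le, hx₂eq⟩ := solve1 s₂ hs₂ltS₂.le
  refine ⟨(x₁, S₂), (x₂, s₂), ?_, ?_, ?_⟩
  · intro h
    have : S₂ = s₂ := congrArg Prod.snd h
    linarith
  · refine ⟨hx₁pos, hx₁le, hS₂, le_rfl, ?_, ?_⟩
    · rw [hS2e]; linarith [hx₁eq]
    · rw [hS2e]
  · refine ⟨hx₂pos, hx₂le, hs₂pos, hs₂ltS₂.le, ?_, ?_⟩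
    · rw [hS2e]; linarith [hx₂eq]
    · rw [hS2e]; exact hs₂eq
end

section
/- Monotone iteration for the final size equation: define recursively ln S_{k+1}(x) = ∫_Ω (β(x,y)/γ(y)) S_k(y) dy + A(x), where A(x) = ln S₀(x) - ∫_Ω (β(x,y)/γ(y))[S₀+E₀+I₀](y)dy, starting from S₀ > 0, with E₀ + I₀ ≥ 0, E₀ + I₀ ≢ 0, β > 0, γ > 0. Then the sequence (S_k) is strictly decreasing pointwise: S_{k+1}(x) < S_k(x) for all k ≥ 0 and a.e. x. -/
open MeasureTheory

lemma my_integral_lt {Ω : Type*} [MeasurableSpace Ω] {μ : Measure Ω} (hμ : μ ≠ 0)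
    {f g : Ω → ℝ} (hf : Integrable f μ) (hg : Integrable g μ)
    (h : ∀ᵐ x ∂μ, f x < g x) : ∫ x, f x ∂μ < ∫ x, g x ∂μ := by
  have hsub : Integrable (fun x => g x - f x) μ := hg.sub hf
  have hpos : 0 < ∫ x, (g x - f x) ∂μ := by
    rw [integral_pos_iff_support_of_nonneg_ae (h.mono fun x hx => by simp [le_of_lt hx]) hsub]
    have hnull : μ (Function.support fun x => g x - f x)ᶜ = 0 := by
      refine measure_mono_null (fun x hx => ?_) h
      simp only [Function.mem_support, Set.mem_compl_iff, not_not] at hx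
      simp only [Set.mem_compl_iff, Set.mem_setOf_eq, not_lt]
      linarith [sub_eq_zero.mp hx]
    have huniv : 0 < μ Set.univ := Measure.measure_univ_pos.mpr hμ
    by_contra hle
    push_neg at hle
    have hz : μ (Function.support fun x => g x - f x) = 0 := le_zero_iff.mp hle
    have hle2 := measure_union_le (μ := μ) (Function.support fun x => g x - f x)
      (Function.support fun x => g x - f x)ᶜ
    simp only [Set.union_compl_self, hnull, hz, add_zero] at hle2
    exact absurd (le_antisymm hle2 zero_le) huniv.ne'
  have hsub2 := integral_sub hg hf
  rw [hsub2] at hpos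
  linarith

theorem stmt14 {Ω : Type*} [MeasurableSpace Ω] (μ : Measure Ω) [IsFiniteMeasure μ]
    (hμ : μ ≠ 0)
    (β : Ω → Ω → ℝ) (γ S₀ E₀ I₀ A : Ω → ℝ) (cγ Cβ CS : ℝ)
    (hβm : Measurable (Function.uncurry β)) (hβpos : ∀ x y, 0 < β x y)
    (hβb : ∀ x y, β x y ≤ Cβ)
    (hcγ : 0 < cγ) (hγ : ∀ y, cγ ≤ γ y) (hγm : Measurable γ)
    (hSm : Measurable S₀) (hEm : Measurable E₀) (hIm : Measurable I₀)
    (hS₀pos : ∀ x, 0 < S₀ x) (hS₀b : ∀ x, S₀ x ≤ CS)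
    (hE₀nn : ∀ x, 0 ≤ E₀ x) (hI₀nn : ∀ x, 0 ≤ I₀ x)
    (hE₀b : ∃ C, ∀ x, E₀ x ≤ C) (hI₀b : ∃ C, ∀ x, I₀ x ≤ C)
    (hEI : ∀ᵐ x ∂μ, 0 < ∫ y, (β x y / γ y) * (E₀ y + I₀ y) ∂μ)
    (hA : ∀ x, A x = Real.log (S₀ x) - ∫ y, (β x y / γ y) * (S₀ y + E₀ y + I₀ y) ∂μ)
    (Sk : ℕ → Ω → ℝ) (hSk0 : Sk 0 = S₀)
    (hrec : ∀ k x, Sk (k + 1) x = Real.exp ((∫ y, (β x y / γ y) * Sk k y ∂μ) + A x)) :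
    ∀ k : ℕ, ∀ᵐ x ∂μ, Sk (k + 1) x < Sk k x := by
  have hγpos : ∀ y, 0 < γ y := fun y => hcγ.trans_le (hγ y)
  have hr_nn : ∀ x y, 0 ≤ β x y / γ y := fun x y => div_nonneg (hβpos x y).le (hγpos y).le
  obtain ⟨x₀⟩ : Nonempty Ω := by
    obtain ⟨x, -⟩ := nonempty_of_measure_ne_zero
      ((Measure.measure_univ_pos.mpr hμ).ne' : μ Set.univ ≠ 0)
    exact ⟨x⟩
  have hCβ : 0 ≤ Cβ / cγ := div_nonneg ((hβpos x₀ x₀).le.trans (hβb x₀ x₀)) hcγ.le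
  have hr_ub : ∀ x y, β x y / γ y ≤ Cβ / cγ := fun x y =>
    div_le_div₀ ((hβpos x₀ x₀).le.trans (hβb x₀ x₀)) (hβb x y) hcγ (hγ y)
  -- measurability of kernel integrals
  have hkm : ∀ (g : Ω → ℝ), Measurable g →
      Measurable (fun x => ∫ y, (β x y / γ y) * g y ∂μ) := by
    intro g hg
    exact (StronglyMeasurable.integral_prod_right'
      (f := fun p : Ω × Ω => (β p.1 p.2 / γ p.2) * g p.2)
      (((hβm.div (hγm.comp measurable_snd)).mul (hg.comp measurable_snd)).stronglyMeasurable)).measurable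
  -- integrability of kernel integrands
  have hint : ∀ (g : Ω → ℝ) (C : ℝ), Measurable g → (∀ᵐ y ∂μ, 0 ≤ g y) →
      (∀ᵐ y ∂μ, g y ≤ C) → ∀ x, Integrable (fun y => (β x y / γ y) * g y) μ := by
    intro g C hg hg0 hgC x
    have hm : Measurable fun y => (β x y / γ y) * g y :=
      ((hβm.comp measurable_prodMk_left).div hγm).mul hg
    refine ⟨hm.aestronglyMeasurable, HasFiniteIntegral.of_bounded (C := (Cβ / cγ) * C) ?_⟩
    filter_upwards [hg0, hgC] with y h0 hC
    rw [Real.norm_eq_abs, abs_of_nonneg (mul_nonneg (hr_nn x y) h0)]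
    exact mul_le_mul (hr_ub x y) hC h0 hCβ
  have hAm : Measurable A := by
    have : A = fun x => Real.log (S₀ x) -
        ∫ y, (β x y / γ y) * (S₀ y + E₀ y + I₀ y) ∂μ := funext hA
    rw [this]
    exact (Real.measurable_log.comp hSm).sub (hkm _ ((hSm.add hEm).add hIm))
  obtain ⟨CE, hCE⟩ := hE₀b
  obtain ⟨CI, hCI⟩ := hI₀b
  have key : ∀ k, Measurable (Sk k) ∧ (∀ᵐ x ∂μ, 0 ≤ Sk k x) ∧ (∀ᵐ x ∂μ, Sk k x ≤ CS)
      ∧ (∀ᵐ x ∂μ, Sk (k + 1) x < Sk k x) := by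
    intro k
    induction k with
    | zero =>
      refine ⟨hSk0 ▸ hSm, Filter.Eventually.of_forall fun x => hSk0 ▸ (hS₀pos x).le,
        Filter.Eventually.of_forall fun x => hSk0 ▸ hS₀b x, ?_⟩
      filter_upwards [hEI] with x hx
      rw [hrec 0 x, hSk0, hA x]
      have hsplit : ∫ y, (β x y / γ y) * (S₀ y + E₀ y + I₀ y) ∂μ =
          (∫ y, (β x y / γ y) * S₀ y ∂μ) + ∫ y, (β x y / γ y) * (E₀ y + I₀ y) ∂μ := by
        rw [← integral_add
          (hint S₀ CS hSm (.of_forall fun y => (hS₀pos y).le) (.of_forall hS₀b) x)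
          (hint (fun y => E₀ y + I₀ y) (CE + CI) (hEm.add hIm)
            (.of_forall fun y => add_nonneg (hE₀nn y) (hI₀nn y))
            (.of_forall fun y => add_le_add (hCE y) (hCI y)) x)]
        congr 1
        ext y
        ring
      rw [hsplit]
      have heq : (∫ y, (β x y / γ y) * S₀ y ∂μ) + (Real.log (S₀ x) -
          ((∫ y, (β x y / γ y) * S₀ y ∂μ) + ∫ y, (β x y / γ y) * (E₀ y + I₀ y) ∂μ)) =
          Real.log (S₀ x) - ∫ y, (β x y / γ y) * (E₀ y + I₀ y) ∂μ := by ring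
      rw [heq]
      calc Real.exp (Real.log (S₀ x) - ∫ y, (β x y / γ y) * (E₀ y + I₀ y) ∂μ)
          < Real.exp (Real.log (S₀ x)) := Real.exp_lt_exp.mpr (by linarith)
        _ = S₀ x := Real.exp_log (hS₀pos x)
    | succ k ih =>
      obtain ⟨hmk, hnn, hub, hdec⟩ := ih
      have hmk1 : Measurable (Sk (k + 1)) := by
        have : Sk (k + 1) = fun x =>
            Real.exp ((∫ y, (β x y / γ y) * Sk k y ∂μ) + A x) := funext (hrec k)
        rw [this]
        exact Real.measurable_exp.comp ((hkm _ hmk).add hAm)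
      have hnn1 : ∀ᵐ x ∂μ, 0 ≤ Sk (k + 1) x :=
        .of_forall fun x => (hrec k x) ▸ (Real.exp_pos _).le
      have hub1 : ∀ᵐ x ∂μ, Sk (k + 1) x ≤ CS := by
        filter_upwards [hdec, hub] with x h1 h2
        exact h1.le.trans h2
      refine ⟨hmk1, hnn1, hub1, Filter.Eventually.of_forall fun x => ?_⟩
      rw [hrec (k + 1) x, hrec k x]
      refine Real.exp_lt_exp.mpr (add_lt_add_left ?_ _)
      refine my_integral_lt hμ (hint _ CS hmk1 hnn1 hub1 x) (hint _ CS hmk hnn hub x) ?_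
      filter_upwards [hdec] with y hy
      exact mul_lt_mul_of_pos_left hy (div_pos (hβpos x y) (hγpos y))
  exact fun k => (key k).2.2.2
end

section
/- Contraction estimate: let T ≥ 0 be such that r := the spectral radius of K_{S(T,·)} satisfies r < 1, let ψ be a positive eigenfunction of the adjoint K*_{S(T,·)} with eigenvalue r, and define F(u)(x) = ∫_Ω (β(x,y)/γ(y)) S(T,y) exp(u(y) - Φ(T,y)) dy on the set 𝒦 = {u ∈ L¹ : 0 ≤ u ≤ Φ(T,·)}, where Φ(T,x) = ∫(β(x,y)/γ(y))[S+E+I](T,y)dy. Then for all u, v ∈ 𝒦, ‖F(u) - F(v)‖_T ≤ r‖u - v‖_T, where ‖u‖_T = ∫_Ω ψ(x)S(T,x)|u(x)|dx. In particular F has at most one fixed point in 𝒦. -/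
open MeasureTheory

lemma exp_lip_nonpos (a b : ℝ) (ha : a ≤ 0) (hb : b ≤ 0) :
    |Real.exp a - Real.exp b| ≤ |a - b| := by
  have key : ∀ c d : ℝ, d ≤ 0 → c ≤ d → Real.exp d - Real.exp c ≤ d - c := by
    intro c d hd hcd
    have h2 : Real.exp d ≤ 1 := Real.exp_le_one_iff.2 hd
    have h3 : c - d + 1 ≤ Real.exp (c - d) := Real.add_one_le_exp _
    have h4 : Real.exp c = Real.exp d * Real.exp (c - d) := by
      rw [← Real.exp_add]; ring_nf
    nlinarith [Real.exp_pos d]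
  rcases le_total a b with h | h
  · rw [abs_sub_comm, abs_of_nonneg (sub_nonneg.2 (Real.exp_le_exp.2 h)),
      abs_sub_comm, abs_of_nonneg (sub_nonneg.2 h)]
    exact key a b hb h
  · rw [abs_of_nonneg (sub_nonneg.2 (Real.exp_le_exp.2 h)),
      abs_of_nonneg (sub_nonneg.2 h)]
    exact key b a ha h

theorem stmt16 {Ω : Type*} [MeasurableSpace Ω] (μ : Measure Ω) [IsFiniteMeasure μ]
    (β : Ω → Ω → ℝ) (γ ST PhiT ψ : Ω → ℝ) (cγ Cβ CS CΦ Cψ r : ℝ)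
    (hβm : Measurable (Function.uncurry β)) (hβpos : ∀ x y, 0 < β x y)
    (hβb : ∀ x y, β x y ≤ Cβ)
    (hcγ : 0 < cγ) (hγ : ∀ y, cγ ≤ γ y) (hγm : Measurable γ)
    (hSTm : Measurable ST) (hSTnn : ∀ x, 0 ≤ ST x)
    (hSTpos : ∀ᵐ x ∂μ, 0 < ST x) (hSTb : ∀ x, ST x ≤ CS)
    (hΦm : Measurable PhiT) (hΦnn : ∀ x, 0 ≤ PhiT x) (hΦb : ∀ x, PhiT x ≤ CΦ)
    (hψm : Measurable ψ) (hψpos : ∀ x, 0 < ψ x) (hψb : ∀ x, ψ x ≤ Cψ)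
    (hr : r < 1)
    (heig : ∀ᵐ y ∂μ, (1 / γ y) * ∫ x, β x y * ST x * ψ x ∂μ = r * ψ y)
    (F : (Ω → ℝ) → Ω → ℝ)
    (hF : ∀ u x, F u x = ∫ y, (β x y / γ y) * ST y * Real.exp (u y - PhiT y) ∂μ) :
    (∀ u v : Ω → ℝ, Measurable u → Measurable v →
      (∀ᵐ x ∂μ, 0 ≤ u x ∧ u x ≤ PhiT x) →
      (∀ᵐ x ∂μ, 0 ≤ v x ∧ v x ≤ PhiT x) →
      (∫ x, ψ x * ST x * |F u x - F v x| ∂μ)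
        ≤ r * ∫ x, ψ x * ST x * |u x - v x| ∂μ) ∧
    (∀ u v : Ω → ℝ, Measurable u → Measurable v →
      (∀ᵐ x ∂μ, 0 ≤ u x ∧ u x ≤ PhiT x) →
      (∀ᵐ x ∂μ, 0 ≤ v x ∧ v x ≤ PhiT x) →
      (∀ᵐ x ∂μ, F u x = u x) → (∀ᵐ x ∂μ, F v x = v x) →
      u =ᵐ[μ] v) := by
  have hγpos : ∀ y, 0 < γ y := fun y => lt_of_lt_of_le hcγ (hγ y)
  have hβxm : ∀ x, Measurable (fun y => β x y) := fun x =>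
    hβm.comp (measurable_prodMk_left)
  have hβym : ∀ y, Measurable (fun x => β x y) := fun y =>
    hβm.comp (measurable_id.prodMk measurable_const)
  -- main contraction estimate
  have hcontr : ∀ u v : Ω → ℝ, Measurable u → Measurable v →
      (∀ᵐ x ∂μ, 0 ≤ u x ∧ u x ≤ PhiT x) →
      (∀ᵐ x ∂μ, 0 ≤ v x ∧ v x ≤ PhiT x) →
      (∫ x, ψ x * ST x * |F u x - F v x| ∂μ)
        ≤ r * ∫ x, ψ x * ST x * |u x - v x| ∂μ := by
    intro u v hu hv hau hav
    set M : ℝ := max (CS * CΦ) 0 with hM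
    have hMnn : 0 ≤ M := le_max_right _ _
    set g : Ω → ℝ := fun y => ST y * |u y - v y| with hg
    set g' : Ω → ℝ := fun y => min (g y) M with hg'
    have hgm : Measurable g := hSTm.mul (hu.sub hv).abs
    have hg'm : Measurable g' := hgm.min measurable_const
    have hg'nn : ∀ y, 0 ≤ g' y := fun y =>
      le_min (mul_nonneg (hSTnn y) (abs_nonneg _)) hMnn
    have hg'le : ∀ y, g' y ≤ M := fun y => min_le_right _ _
    have hgg' : ∀ᵐ y ∂μ, g y = g' y := by
      filter_upwards [hau, hav] with y ⟨hu0, huΦ⟩ ⟨hv0, hvΦ⟩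
      have habs : |u y - v y| ≤ CΦ := by
        rw [abs_sub_le_iff]
        constructor
        · linarith [le_trans huΦ (hΦb y)]
        · linarith [le_trans hvΦ (hΦb y)]
      have : g y ≤ M := by
        refine le_trans ?_ (le_max_left _ _)
        exact mul_le_mul (hSTb y) habs (abs_nonneg _) (le_trans (hSTnn y) (hSTb y))
      exact (min_eq_left this).symm
    -- pointwise estimate on |F u x - F v x|
    have hFle : ∀ x, |F u x - F v x| ≤ ∫ y, (β x y / γ y) * g' y ∂μ := by
      intro x
      rw [hF, hF]
      set f1 : Ω → ℝ := fun y => (β x y / γ y) * ST y * Real.exp (u y - PhiT y) with hf1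
      set f2 : Ω → ℝ := fun y => (β x y / γ y) * ST y * Real.exp (v y - PhiT y) with hf2
      have hint : ∀ (w : Ω → ℝ), Measurable w → (∀ᵐ y ∂μ, 0 ≤ w y ∧ w y ≤ PhiT y) →
          Integrable (fun y => (β x y / γ y) * ST y * Real.exp (w y - PhiT y)) μ := by
        intro w hw haw
        refine ⟨((((hβxm x).div hγm).mul hSTm).mul ((hw.sub hΦm).exp)).aestronglyMeasurable,
          HasFiniteIntegral.of_bounded (C := Cβ / cγ * CS * 1) ?_⟩
        filter_upwards [haw] with y ⟨h0, hΦ⟩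
        have h1 : Real.exp (w y - PhiT y) ≤ 1 := Real.exp_le_one_iff.2 (by linarith)
        have h2 : (0:ℝ) < γ y := hγpos y
        have hd : β x y / γ y ≤ Cβ / cγ :=
          div_le_div₀ (le_trans (le_of_lt (hβpos x y)) (hβb x y)) (hβb x y) hcγ (hγ y)
        have hdnn : 0 ≤ β x y / γ y := le_of_lt (div_pos (hβpos x y) h2)
        have hCd : 0 ≤ Cβ / cγ := le_trans hdnn hd
        have hCS : 0 ≤ CS := le_trans (hSTnn y) (hSTb y)
        rw [Real.norm_eq_abs, abs_of_nonneg
          (mul_nonneg (mul_nonneg hdnn (hSTnn y)) (Real.exp_nonneg _))]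
        exact mul_le_mul (mul_le_mul hd (hSTb y) (hSTnn y) hCd)
          h1 (Real.exp_nonneg _) (mul_nonneg hCd hCS)
      have hf1i : Integrable f1 μ := hint u hu hau
      have hf2i : Integrable f2 μ := hint v hv hav
      rw [← integral_sub hf1i hf2i]
      have h1 : |∫ y, (f1 y - f2 y) ∂μ| ≤ ∫ y, |f1 y - f2 y| ∂μ := by
        simpa [Real.norm_eq_abs] using
          norm_integral_le_integral_norm (fun y => f1 y - f2 y) (μ := μ)
      refine le_trans h1 ?_
      have hRi : Integrable (fun y => (β x y / γ y) * g' y) μ := by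
        refine ⟨(((hβxm x).div hγm).mul hg'm).aestronglyMeasurable,
          HasFiniteIntegral.of_bounded (C := Cβ / cγ * M) ?_⟩
        refine Filter.Eventually.of_forall fun y => ?_
        have h2 : (0:ℝ) < γ y := hγpos y
        have hd : β x y / γ y ≤ Cβ / cγ :=
          div_le_div₀ (le_trans (le_of_lt (hβpos x y)) (hβb x y)) (hβb x y) hcγ (hγ y)
        have hdnn : 0 ≤ β x y / γ y := le_of_lt (div_pos (hβpos x y) h2)
        rw [Real.norm_eq_abs, abs_of_nonneg (mul_nonneg hdnn (hg'nn y))]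
        exact mul_le_mul hd (hg'le y) (hg'nn y) (le_trans hdnn hd)
      refine integral_mono_ae (hf1i.sub hf2i).abs hRi ?_
      filter_upwards [hau, hav, hgg'] with y ⟨hu0, huΦ⟩ ⟨hv0, hvΦ⟩ hgy
      have hlip : |Real.exp (u y - PhiT y) - Real.exp (v y - PhiT y)| ≤ |u y - v y| := by
        have := exp_lip_nonpos (u y - PhiT y) (v y - PhiT y) (by linarith) (by linarith)
        simpa using this
      have h2 : (0:ℝ) < γ y := hγpos y
      have hc : (0:ℝ) ≤ β x y / γ y * ST y :=
        mul_nonneg (le_of_lt (div_pos (hβpos x y) h2)) (hSTnn y)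
      calc |f1 y - f2 y|
          = (β x y / γ y * ST y) * |Real.exp (u y - PhiT y) - Real.exp (v y - PhiT y)| := by
            rw [← abs_of_nonneg hc, ← abs_mul]; congr 1; simp only [hf1, hf2]; ring
        _ ≤ (β x y / γ y * ST y) * |u y - v y| := by
            exact mul_le_mul_of_nonneg_left hlip hc
        _ = (β x y / γ y) * g y := by simp only [hg]; ring
        _ = (β x y / γ y) * g' y := by rw [hgy]
    -- the double-integral function
    set f : Ω → Ω → ℝ := fun x y => (ψ x * ST x) * ((β x y / γ y) * g' y) with hfdef
    have hfm : Measurable (Function.uncurry f) := by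
      apply Measurable.mul
      · exact ((hψm.comp measurable_fst).mul (hSTm.comp measurable_fst))
      · exact ((hβm.div (hγm.comp measurable_snd)).mul (hg'm.comp measurable_snd))
    have hfbd : ∀ z : Ω × Ω, ‖Function.uncurry f z‖ ≤ Cψ * CS * (Cβ / cγ * M) := by
      rintro ⟨x, y⟩
      have h2 : (0:ℝ) < γ y := hγpos y
      have hd : β x y / γ y ≤ Cβ / cγ :=
        div_le_div₀ (le_trans (le_of_lt (hβpos x y)) (hβb x y)) (hβb x y) hcγ (hγ y)
      have hψx := hψpos x
      have hβxy := hβpos x y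
      have hg'y := hg'nn y
      have hSTx := hSTnn x
      have hdnn : 0 ≤ β x y / γ y := le_of_lt (div_pos hβxy h2)
      have hCd : 0 ≤ Cβ / cγ := le_trans hdnn hd
      rw [Real.norm_eq_abs, Function.uncurry, abs_of_nonneg
        (mul_nonneg (mul_nonneg (le_of_lt hψx) hSTx) (mul_nonneg hdnn hg'y))]
      have h1 : ψ x * ST x ≤ Cψ * CS :=
        mul_le_mul (hψb x) (hSTb x) hSTx (le_trans (le_of_lt hψx) (hψb x))
      have h3 : (β x y / γ y) * g' y ≤ Cβ / cγ * M :=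
        mul_le_mul hd (hg'le y) hg'y hCd
      exact mul_le_mul h1 h3 (mul_nonneg hdnn hg'y)
        (mul_nonneg (le_trans (le_of_lt hψx) (hψb x)) (le_trans hSTx (hSTb x)))
    have hfi : Integrable (Function.uncurry f) (μ.prod μ) :=
      ⟨hfm.aestronglyMeasurable,
        HasFiniteIntegral.of_bounded (Filter.Eventually.of_forall hfbd)⟩
    -- step 2 : bound LHS by the double integral
    have hGint : Integrable (fun x => ∫ y, f x y ∂μ) μ := by
      refine ⟨(hfm.stronglyMeasurable.integral_prod_right').aestronglyMeasurable,
        HasFiniteIntegral.of_bounded (C := Cψ * CS * (Cβ / cγ * M) * (μ Set.univ).toReal) ?_⟩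
      refine Filter.Eventually.of_forall fun x => ?_
      exact norm_integral_le_of_norm_le_const
        (Filter.Eventually.of_forall fun y => hfbd (x, y))
    have hstep2 : (∫ x, ψ x * ST x * |F u x - F v x| ∂μ) ≤ ∫ x, ∫ y, f x y ∂μ ∂μ := by
      refine integral_mono_of_nonneg ?_ hGint ?_
      · refine Filter.Eventually.of_forall fun x => ?_
        have := hψpos x
        have := hSTnn x
        positivity
      · refine Filter.Eventually.of_forall fun x => ?_
        have h1 : ψ x * ST x * |F u x - F v x| ≤ ψ x * ST x * ∫ y, (β x y / γ y) * g' y ∂μ :=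
          mul_le_mul_of_nonneg_left (hFle x)
            (mul_nonneg (le_of_lt (hψpos x)) (hSTnn x))
        calc ψ x * ST x * |F u x - F v x|
            ≤ ψ x * ST x * ∫ y, (β x y / γ y) * g' y ∂μ := h1
          _ = ∫ y, f x y ∂μ := (integral_const_mul (ψ x * ST x) _).symm
    -- step 3 : Fubini & eigenfunction identity
    have hswap : ∫ x, ∫ y, f x y ∂μ ∂μ = ∫ y, ∫ x, f x y ∂μ ∂μ :=
      integral_integral_swap hfi
    have hinner : ∀ y, ∫ x, f x y ∂μ
        = (g' y * (γ y)⁻¹) * ∫ x, β x y * ST x * ψ x ∂μ := by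
      intro y
      rw [← integral_const_mul]
      refine integral_congr_ae (Filter.Eventually.of_forall fun x => ?_)
      simp only [hfdef, div_eq_mul_inv]; ring
    have hstep3 : ∫ y, ∫ x, f x y ∂μ ∂μ = r * ∫ x, ψ x * ST x * |u x - v x| ∂μ := by
      have h1 : ∫ y, ∫ x, f x y ∂μ ∂μ = ∫ y, r * (ψ y * ST y * |u y - v y|) ∂μ := by
        refine integral_congr_ae ?_
        filter_upwards [heig, hgg'] with y hy hgy
        rw [hinner y]
        have : (g' y * (γ y)⁻¹) * ∫ x, β x y * ST x * ψ x ∂μ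
            = g' y * ((1 / γ y) * ∫ x, β x y * ST x * ψ x ∂μ) := by
          rw [one_div]; ring
        rw [this, hy, ← hgy]
        simp only [hg]; ring
      rw [h1, integral_const_mul]
    calc (∫ x, ψ x * ST x * |F u x - F v x| ∂μ)
        ≤ ∫ x, ∫ y, f x y ∂μ ∂μ := hstep2
      _ = ∫ y, ∫ x, f x y ∂μ ∂μ := hswap
      _ = r * ∫ x, ψ x * ST x * |u x - v x| ∂μ := hstep3
  refine ⟨hcontr, ?_⟩
  intro u v hu hv hau hav hFu hFv
  set I : ℝ := ∫ x, ψ x * ST x * |u x - v x| ∂μ with hI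
  have hIeq : I = ∫ x, ψ x * ST x * |F u x - F v x| ∂μ := by
    refine integral_congr_ae ?_
    filter_upwards [hFu, hFv] with x h1 h2
    rw [h1, h2]
  have hle : I ≤ r * I := by
    have h := hcontr u v hu hv hau hav
    rw [← hI] at h
    rw [← hIeq] at h
    exact h
  have hInn : 0 ≤ I := by
    refine integral_nonneg fun x => ?_
    have := hψpos x
    have := hSTnn x
    positivity
  have hI0 : I = 0 := by nlinarith
  have hint : Integrable (fun x => ψ x * ST x * |u x - v x|) μ := by
    refine ⟨(hψm.mul hSTm |>.mul (hu.sub hv).abs).aestronglyMeasurable,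
      HasFiniteIntegral.of_bounded (C := Cψ * (CS * CΦ)) ?_⟩
    filter_upwards [hau, hav] with x ⟨hu0, huΦ⟩ ⟨hv0, hvΦ⟩
    have habs : |u x - v x| ≤ CΦ := by
      rw [abs_sub_le_iff]
      constructor
      · linarith [le_trans huΦ (hΦb x)]
      · linarith [le_trans hvΦ (hΦb x)]
    have hψx := hψpos x
    have hSTx := hSTnn x
    rw [Real.norm_eq_abs, abs_of_nonneg (by positivity)]
    have h2 : ST x * |u x - v x| ≤ CS * CΦ :=
      mul_le_mul (hSTb x) habs (abs_nonneg _) (le_trans hSTx (hSTb x))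
    calc ψ x * ST x * |u x - v x| = ψ x * (ST x * |u x - v x|) := by ring
      _ ≤ Cψ * (CS * CΦ) := mul_le_mul (hψb x) h2 (by positivity)
          (le_trans (le_of_lt hψx) (hψb x))
  have hzero : (fun x => ψ x * ST x * |u x - v x|) =ᵐ[μ] 0 := by
    refine (integral_eq_zero_iff_of_nonneg (fun x => ?_) hint).1 hI0
    have := hψpos x; have := hSTnn x; positivity
  filter_upwards [hzero, hSTpos] with x h0 hSTx
  have hc : (0:ℝ) < ψ x * ST x := mul_pos (hψpos x) hSTx
  have habs : |u x - v x| = 0 := by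
    by_contra h
    have : ψ x * ST x * |u x - v x| ≠ 0 := mul_ne_zero (ne_of_gt hc) h
    exact this h0
  have := abs_eq_zero.mp habs
  linarith
end
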